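/- Let (X, 𝒜, μ) be a monotone measure space and f : X → ℝ measurable. If |f| is pan-integrable then f is pan-integrable. Moreover, if μ is subadditive, then f is pan-integrable if and only if |f| is pan-integrable. -/

import Mathlib

open Set Filter
open scoped ENNReal NNReal Topology

variable {X : Type*}

/-- A monotone measure: vanishes on the empty set, positive on the whole space,
and monotone on measurable sets. -/
structure MonotoneMeasure [MeasurableSpace X] (mu : Set X → ℝ≥0∞) : Prop where
  empty : mu ∅ = 0
  univ_pos : 0 < mu Set.univ
  mono : ∀ ⦃A B : Set X⦄, MeasurableSet A → MeasurableSet B → A ⊆ B → mu A ≤ mu B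

/-- A finite measurable partition of `X`. -/
def IsPanPartition [MeasurableSpace X] {n : ℕ} (A : Fin n → Set X) : Prop :=
  (∀ i, MeasurableSet (A i)) ∧ Pairwise (Function.onFun Disjoint A) ∧ (⋃ i, A i) = Set.univ

/-- The `(+,·)`-based pan-integral of a nonnegative function on `X`. -/
noncomputable def panIntegral [MeasurableSpace X] (mu : Set X → ℝ≥0∞) (f : X → ℝ≥0∞) : ℝ≥0∞ :=
  ⨆ (n : ℕ) (A : Fin n → Set X) (_ : IsPanPartition A) (lam : Fin n → ℝ≥0)
    (_ : ∀ x, ∑ i, Set.indicator (A i) (fun _ => (lam i : ℝ≥0∞)) x ≤ f x),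
    ∑ i, (lam i : ℝ≥0∞) * mu (A i)

/-- The pan-integral of `f` on a set `A`, i.e. the pan-integral of `f·χ_A` on `X`. -/
noncomputable def panIntegralOn [MeasurableSpace X] (mu : Set X → ℝ≥0∞) (f : X → ℝ≥0∞)
    (A : Set X) : ℝ≥0∞ :=
  panIntegral mu (A.indicator f)

/-- Subadditivity of a set function. -/
def PanSubadditive [MeasurableSpace X] (mu : Set X → ℝ≥0∞) : Prop :=
  ∀ ⦃A B : Set X⦄, MeasurableSet A → MeasurableSet B → mu (A ∪ B) ≤ mu A + mu B

/-- Null-additivity of a set function. -/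
def PanNullAdditive [MeasurableSpace X] (mu : Set X → ℝ≥0∞) : Prop :=
  ∀ ⦃A B : Set X⦄, MeasurableSet A → MeasurableSet B → mu B = 0 → mu (A ∪ B) = mu A

/-- Continuity from below of a set function. -/
def PanContinuousFromBelow [MeasurableSpace X] (mu : Set X → ℝ≥0∞) : Prop :=
  ∀ E : ℕ → Set X, (∀ n, MeasurableSet (E n)) → Monotone E →
    Filter.Tendsto (fun n => mu (E n)) Filter.atTop (nhds (mu (⋃ n, E n)))

/-- A real-valued function is pan-integrable if the pan-integrals of its
positive and negative parts are both finite. -/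
def PanIntegrable [MeasurableSpace X] (mu : Set X → ℝ≥0∞) (f : X → ℝ) : Prop :=
  panIntegral mu (fun x => ENNReal.ofReal (f x)) < ⊤ ∧
    panIntegral mu (fun x => ENNReal.ofReal (-f x)) < ⊤

/-- The symmetric pan-integral of a real-valued function:
`∫ f⁺ dμ − ∫ f⁻ dμ`. -/
noncomputable def panIntegralReal [MeasurableSpace X] (mu : Set X → ℝ≥0∞) (f : X → ℝ) : ℝ :=
  (panIntegral mu (fun x => ENNReal.ofReal (f x))).toReal -
    (panIntegral mu (fun x => ENNReal.ofReal (-f x))).toReal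

/-- The `‖·‖_{μ,p}` functional: `(∫_E^pan |f|^p dμ)^(1/p)`. -/
noncomputable def panNorm [MeasurableSpace X] (mu : Set X → ℝ≥0∞) (E : Set X) (p : ℝ)
    (f : X → ℝ) : ℝ≥0∞ :=
  (panIntegralOn mu (fun x => ENNReal.ofReal (|f x| ^ p)) E) ^ (1 / p)

lemma panIntegral_mono' [MeasurableSpace X] (mu : Set X → ℝ≥0∞) {g h : X → ℝ≥0∞}
    (hle : ∀ x, g x ≤ h x) : panIntegral mu g ≤ panIntegral mu h := by
  refine iSup_mono fun n => iSup_mono fun A => iSup_mono fun hA => iSup_mono fun lam =>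
    iSup_mono' fun hl => ⟨fun x => (hl x).trans (hle x), le_rfl⟩

lemma le_panIntegral' [MeasurableSpace X] (mu : Set X → ℝ≥0∞) {n : ℕ} {A : Fin n → Set X}
    (hA : IsPanPartition A) {lam : Fin n → ℝ≥0} {g : X → ℝ≥0∞}
    (hl : ∀ x, ∑ i, Set.indicator (A i) (fun _ => (lam i : ℝ≥0∞)) x ≤ g x) :
    ∑ i, (lam i : ℝ≥0∞) * mu (A i) ≤ panIntegral mu g :=
  le_iSup_of_le n <| le_iSup_of_le A <| le_iSup_of_le hA <| le_iSup_of_le lam <|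
    le_iSup_of_le hl le_rfl

lemma snoc_partition' [MeasurableSpace X] {n : ℕ} {A : Fin n → Set X} (hA : IsPanPartition A)
    {S : Set X} (hS : MeasurableSet S) :
    IsPanPartition (Fin.snoc (fun i => A i ∩ S) Sᶜ : Fin (n+1) → Set X) := by
  obtain ⟨hm, hd, hu⟩ := hA
  refine ⟨?_, ?_, ?_⟩
  · intro i
    rcases Fin.eq_castSucc_or_eq_last i with ⟨j, rfl⟩ | rfl
    · simpa [Fin.snoc_castSucc] using (hm j).inter hS
    · simpa [Fin.snoc_last] using hS.compl
  · intro i j hij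
    rcases Fin.eq_castSucc_or_eq_last i with ⟨i', rfl⟩ | rfl <;>
      rcases Fin.eq_castSucc_or_eq_last j with ⟨j', rfl⟩ | rfl
    · have hne : i' ≠ j' := fun h => hij (by rw [h])
      simpa [Function.onFun, Fin.snoc_castSucc] using
        ((hd hne).mono inf_le_left inf_le_left)
    · simpa [Function.onFun, Fin.snoc_castSucc, Fin.snoc_last] using
        (disjoint_compl_right.mono_left (inf_le_right : A i' ∩ S ≤ S))
    · simpa [Function.onFun, Fin.snoc_castSucc, Fin.snoc_last] using
        (disjoint_compl_right.mono_left (inf_le_right : A j' ∩ S ≤ S)).symm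
    · exact absurd rfl hij
  · apply Set.eq_univ_of_forall; intro x
    by_cases hx : x ∈ S
    · have : x ∈ ⋃ i, A i := hu ▸ Set.mem_univ x
      obtain ⟨i, hi⟩ := Set.mem_iUnion.1 this
      exact Set.mem_iUnion.2 ⟨i.castSucc, by simp [Fin.snoc_castSucc]; exact ⟨hi, hx⟩⟩
    · exact Set.mem_iUnion.2 ⟨Fin.last n, by simpa [Fin.snoc_last] using hx⟩

lemma restrict_le_panIntegral' [MeasurableSpace X] (mu : Set X → ℝ≥0∞) {n : ℕ}
    {A : Fin n → Set X} (hA : IsPanPartition A) {lam : Fin n → ℝ≥0} {S : Set X}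
    (hS : MeasurableSet S) {g : X → ℝ≥0∞}
    (hl : ∀ x ∈ S, ∑ i, Set.indicator (A i) (fun _ => (lam i : ℝ≥0∞)) x ≤ g x) :
    ∑ i, (lam i : ℝ≥0∞) * mu (A i ∩ S) ≤ panIntegral mu g := by
  have hpart := snoc_partition' hA hS
  have hle : ∀ x, ∑ j : Fin (n+1),
      Set.indicator ((Fin.snoc (fun i => A i ∩ S) Sᶜ : Fin (n+1) → Set X) j)
        (fun _ => ((Fin.snoc lam 0 : Fin (n+1) → ℝ≥0) j : ℝ≥0∞)) x ≤ g x := by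
    intro x
    rw [Fin.sum_univ_castSucc]
    simp only [Fin.snoc_castSucc, Fin.snoc_last, ENNReal.coe_zero]
    have hlast : Set.indicator Sᶜ (fun _ => (0:ℝ≥0∞)) x = 0 := by simp
    rw [hlast, add_zero]
    by_cases hx : x ∈ S
    · calc ∑ i, Set.indicator (A i ∩ S) (fun _ => (lam i : ℝ≥0∞)) x
          ≤ ∑ i, Set.indicator (A i) (fun _ => (lam i : ℝ≥0∞)) x :=
            Finset.sum_le_sum fun i _ =>
              Set.indicator_le_indicator_of_subset Set.inter_subset_left
                (fun _ => zero_le) x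
        _ ≤ g x := hl x hx
    · have hz : ∀ i : Fin n, Set.indicator (A i ∩ S) (fun _ => (lam i : ℝ≥0∞)) x = 0 :=
        fun i => Set.indicator_of_notMem (fun h => hx h.2) _
      simp [hz]
  have hmain := le_panIntegral' mu hpart (lam := Fin.snoc lam 0) hle
  calc ∑ i, (lam i : ℝ≥0∞) * mu (A i ∩ S)
      = ∑ j : Fin (n+1), ((Fin.snoc lam 0 : Fin (n+1) → ℝ≥0) j : ℝ≥0∞) *
          mu ((Fin.snoc (fun i => A i ∩ S) Sᶜ : Fin (n+1) → Set X) j) := by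
        rw [Fin.sum_univ_castSucc]; simp [Fin.snoc_castSucc, Fin.snoc_last]
    _ ≤ panIntegral mu g := hmain

lemma panIntegral_abs_le' [MeasurableSpace X] (mu : Set X → ℝ≥0∞)
    (hsub : PanSubadditive mu) {f : X → ℝ} (hf : Measurable f) :
    panIntegral mu (fun x => ENNReal.ofReal (|f x|)) ≤
      panIntegral mu (fun x => ENNReal.ofReal (f x)) +
        panIntegral mu (fun x => ENNReal.ofReal (-f x)) := by
  refine iSup_le fun n => iSup_le fun A => iSup_le fun hA => iSup_le fun lam =>
    iSup_le fun hl => ?_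
  set P : Set X := {x | 0 ≤ f x} with hPdef
  have hP : MeasurableSet P := measurableSet_le measurable_const hf
  have h1 : ∑ i, (lam i : ℝ≥0∞) * mu (A i ∩ P) ≤
      panIntegral mu (fun x => ENNReal.ofReal (f x)) := by
    refine restrict_le_panIntegral' mu hA hP fun x hx => (hl x).trans ?_
    simp only []; rw [abs_of_nonneg (show (0:ℝ) ≤ f x from hx)]
  have h2 : ∑ i, (lam i : ℝ≥0∞) * mu (A i ∩ Pᶜ) ≤
      panIntegral mu (fun x => ENNReal.ofReal (-f x)) := by
    refine restrict_le_panIntegral' mu hA hP.compl fun x hx => (hl x).trans ?_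
    have hneg : f x < 0 := lt_of_not_ge hx
    simp only []; rw [abs_of_neg hneg]
  calc ∑ i, (lam i : ℝ≥0∞) * mu (A i)
      ≤ ∑ i, (lam i : ℝ≥0∞) * (mu (A i ∩ P) + mu (A i ∩ Pᶜ)) := by
        refine Finset.sum_le_sum fun i _ => mul_le_mul_right ?_ _
        have hAi : A i = (A i ∩ P) ∪ (A i ∩ Pᶜ) := by
          rw [← Set.inter_union_distrib_left, Set.union_compl_self, Set.inter_univ]
        conv_lhs => rw [hAi]
        exact hsub ((hA.1 i).inter hP) ((hA.1 i).inter hP.compl)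
    _ = (∑ i, (lam i : ℝ≥0∞) * mu (A i ∩ P)) + ∑ i, (lam i : ℝ≥0∞) * mu (A i ∩ Pᶜ) := by
        simp [mul_add, Finset.sum_add_distrib]
    _ ≤ _ := add_le_add h1 h2

theorem panIntegrable_of_abs_and_iff [MeasurableSpace X]
    (mu : Set X → ℝ≥0∞) (hmu : MonotoneMeasure mu)
    (f : X → ℝ) (hf : Measurable f) :
    (PanIntegrable mu (fun x => |f x|) → PanIntegrable mu f) ∧
      (PanSubadditive mu →
        (PanIntegrable mu f ↔ PanIntegrable mu (fun x => |f x|))) := by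
  have pos_le : ∀ x, ENNReal.ofReal (f x) ≤ ENNReal.ofReal (|f x|) := fun x =>
    ENNReal.ofReal_le_ofReal (le_abs_self _)
  have neg_le : ∀ x, ENNReal.ofReal (-f x) ≤ ENNReal.ofReal (|f x|) := fun x =>
    ENNReal.ofReal_le_ofReal (neg_le_abs _)
  have fwd : PanIntegrable mu (fun x => |f x|) → PanIntegrable mu f := by
    rintro ⟨h1, _⟩
    exact ⟨lt_of_le_of_lt (panIntegral_mono' mu pos_le) h1,
      lt_of_le_of_lt (panIntegral_mono' mu neg_le) h1⟩
  refine ⟨fwd, fun hsub => ⟨fun hint => ?_, fwd⟩⟩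
  obtain ⟨h1, h2⟩ := hint
  constructor
  · exact lt_of_le_of_lt (panIntegral_abs_le' mu hsub hf)
      (ENNReal.add_lt_top.2 ⟨h1, h2⟩)
  · have hz : ∀ x, ENNReal.ofReal (-|f x|) ≤ ENNReal.ofReal (f x) := fun x => by
      rw [ENNReal.ofReal_of_nonpos (neg_nonpos.2 (abs_nonneg _))]; exact zero_le
    exact lt_of_le_of_lt (panIntegral_mono' mu hz) h1
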